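/- For any β ∈ (0, 1) and any γ ∈ [0, 1] with β ≤ 1 − γ, one has √(1 − γ)·φ(β/(1 − γ)) ≥ φ(β), where φ is extended by φ(β) = 0 for β ≤ 1/2. -/
import Mathlib


noncomputable def phi (β : ℝ) : ℝ :=
  if β ≤ 1/2 then 0
  else if β ≤ 3/4 then Real.sqrt (2 * β - 1)
  else Real.sqrt 2 * (1 - Real.sqrt (1 - β))

lemma phi_nonneg (x : ℝ) : 0 ≤ phi x := by
  unfold phi
  split_ifs with h1 h2
  · exact le_refl 0
  · exact Real.sqrt_nonneg _
  · push_neg at h2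
    have hs : Real.sqrt (1 - x) ≤ 1 := Real.sqrt_le_one.mpr (by linarith)
    exact mul_nonneg (Real.sqrt_nonneg 2) (by linarith)

set_option maxHeartbeats 1600000 in
theorem stmt_4 (β γ : ℝ) (hβ : β ∈ Set.Ioo (0:ℝ) 1) (hγ : γ ∈ Set.Icc (0:ℝ) 1)
    (h : β ≤ 1 - γ) :
    phi β ≤ Real.sqrt (1 - γ) * phi (β / (1 - γ)) := by
  obtain ⟨hβ0, hβ1⟩ := hβ
  obtain ⟨hγ0, hγ1⟩ := hγ
  set t := 1 - γ with htdef
  have ht0 : 0 < t := lt_of_lt_of_le hβ0 h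
  have ht1 : t ≤ 1 := by rw [htdef]; linarith
  have hβt : β ≤ t := h
  by_cases h1 : β ≤ 1/2
  · have hz : phi β = 0 := by unfold phi; rw [if_pos h1]
    rw [hz]
    exact mul_nonneg (Real.sqrt_nonneg _) (phi_nonneg _)
  · push_neg at h1
    have hd1 : β ≤ β / t := by
      rw [le_div_iff₀ ht0]
      nlinarith
    have hd2 : β / t ≤ 1 := (div_le_one ht0).mpr hβt
    have hkey : t * (1 - β / t) = t - β := by field_simp
    have hsq : Real.sqrt t * Real.sqrt (1 - β / t) = Real.sqrt (t - β) := by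
      rw [← Real.sqrt_mul ht0.le, hkey]
    by_cases h2 : β / t ≤ 3/4
    · have h3 : β ≤ 3/4 := le_trans hd1 h2
      have e1 : phi β = Real.sqrt (2 * β - 1) := by
        unfold phi; rw [if_neg (by linarith), if_pos h3]
      have e2 : phi (β / t) = Real.sqrt (2 * (β / t) - 1) := by
        unfold phi; rw [if_neg (by linarith), if_pos h2]
      rw [e1, e2, ← Real.sqrt_mul ht0.le]
      apply Real.sqrt_le_sqrt
      have hmul : t * (2 * (β / t) - 1) = 2 * β - t := by
        field_simp
      rw [hmul]; linarith
    · push_neg at h2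
      have h34t : 3 * t < 4 * β := by
        have := (lt_div_iff₀ ht0).mp h2
        linarith
      have e2 : phi (β / t) = Real.sqrt 2 * (1 - Real.sqrt (1 - β / t)) := by
        unfold phi; rw [if_neg (by linarith), if_neg (by linarith)]
      rw [e2]
      have hrhs : Real.sqrt t * (Real.sqrt 2 * (1 - Real.sqrt (1 - β / t)))
          = Real.sqrt 2 * (Real.sqrt t - Real.sqrt (t - β)) := by
        rw [← hsq]; ring
      rw [hrhs]
      set a := Real.sqrt t with hadef
      set b := Real.sqrt (t - β) with hbdef
      have ha : a ^ 2 = t := Real.sq_sqrt ht0.le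
      have hb : b ^ 2 = t - β := Real.sq_sqrt (by linarith)
      have ha0 : 0 ≤ a := Real.sqrt_nonneg _
      have hb0 : 0 ≤ b := Real.sqrt_nonneg _
      have hba : b ≤ a := Real.sqrt_le_sqrt (by linarith)
      by_cases h3 : β ≤ 3/4
      · have e1 : phi β = Real.sqrt (2 * β - 1) := by
          unfold phi; rw [if_neg (by linarith), if_pos h3]
        rw [e1]
        have hab : a * b = Real.sqrt (t * (t - β)) := (Real.sqrt_mul ht0.le _).symm
        have hbound : a * b ≤ (4 * (t - β) + 1) / 4 := by
          rw [hab]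
          have h4 : t * (t - β) ≤ ((4 * (t - β) + 1) / 4) ^ 2 := by
            nlinarith [mul_nonneg (by linarith : (0:ℝ) ≤ 3 - 4 * β)
              (by linarith : (0:ℝ) ≤ 4 * β + 1),
              mul_nonneg (by linarith : (0:ℝ) ≤ 4 * β - 3 * t)
              (by linarith : (0:ℝ) ≤ 2 * β - 1)]
          calc Real.sqrt (t * (t - β)) ≤ Real.sqrt (((4 * (t - β) + 1) / 4) ^ 2) :=
                Real.sqrt_le_sqrt h4
            _ = (4 * (t - β) + 1) / 4 := Real.sqrt_sq (by linarith)
        have h2sq : Real.sqrt 2 ^ 2 = 2 := Real.sq_sqrt (by norm_num)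
        have hexp : (Real.sqrt 2 * (a - b)) ^ 2 = 2 * (a - b) ^ 2 := by
          rw [mul_pow, h2sq]
        have hfin : 2 * β - 1 ≤ (Real.sqrt 2 * (a - b)) ^ 2 := by
          rw [hexp]
          nlinarith [ha, hb, hbound]
        calc Real.sqrt (2 * β - 1) ≤ Real.sqrt ((Real.sqrt 2 * (a - b)) ^ 2) :=
              Real.sqrt_le_sqrt hfin
          _ = Real.sqrt 2 * (a - b) :=
              Real.sqrt_sq (mul_nonneg (Real.sqrt_nonneg 2) (by linarith))
      · push_neg at h3
        have e1 : phi β = Real.sqrt 2 * (1 - Real.sqrt (1 - β)) := by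
          unfold phi; rw [if_neg (by linarith), if_neg (by linarith)]
        rw [e1]
        set c := Real.sqrt (1 - β) with hcdef
        have hc : c ^ 2 = 1 - β := Real.sq_sqrt (by linarith)
        have hc0 : 0 ≤ c := Real.sqrt_nonneg _
        have hac : a * c = Real.sqrt (t * (1 - β)) := (Real.sqrt_mul ht0.le _).symm
        have hacb : b ≤ a * c := by
          rw [hac]
          have hprod : (0:ℝ) ≤ β * (1 - t) := mul_nonneg hβ0.le (by linarith)
          exact Real.sqrt_le_sqrt (by nlinarith [hprod])
        have hsq2 : (1 + b) ^ 2 ≤ (a + c) ^ 2 := by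
          have q1 : (a + c) ^ 2 = a ^ 2 + 2 * (a * c) + c ^ 2 := by ring
          have q2 : (1 + b) ^ 2 = 1 + 2 * b + b ^ 2 := by ring
          rw [q1, q2, ha, hb, hc]; linarith
        have key : 1 + b ≤ a + c := by
          have h1' := Real.sqrt_le_sqrt hsq2
          rwa [Real.sqrt_sq (by linarith), Real.sqrt_sq (by linarith)] at h1'
        exact mul_le_mul_of_nonneg_left (by linarith) (Real.sqrt_nonneg 2)
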